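/- For every μ₂ > 0 and μ₁ ∈ ℝ, the function U(t₁,t₂) = log(2μ₂ / ((t₁-μ₁)² + (t₂+μ₂)²)) is harmonic on the open upper half-plane and satisfies -∂U/∂t₂(t₁,0) = e^{U(t₁,0)} for all t₁ ∈ ℝ. -/

import Mathlib

private lemma quad_hasDerivAt (a b x : ℝ) :
    HasDerivAt (fun s : ℝ => (s - a) ^ 2 + b) (2 * (x - a)) x := by
  have h : HasDerivAt (fun s : ℝ => s - a) 1 x := (hasDerivAt_id x).sub_const a
  simpa using (h.pow 2).add_const b

private lemma logC_hasDerivAt (C a b : ℝ) (hC : C ≠ 0) (x : ℝ)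
    (hx : (x - a) ^ 2 + b ≠ 0) :
    HasDerivAt (fun s : ℝ => Real.log (C / ((s - a) ^ 2 + b)))
      (-(2 * (x - a)) / ((x - a) ^ 2 + b)) x := by
  have hq := quad_hasDerivAt a b x
  have hdiv : HasDerivAt (fun s : ℝ => C / ((s - a) ^ 2 + b))
      ((0 * ((x - a) ^ 2 + b) - C * (2 * (x - a))) / ((x - a) ^ 2 + b) ^ 2) x :=
    (hasDerivAt_const x C).div hq hx
  have hne : C / ((x - a) ^ 2 + b) ≠ 0 := div_ne_zero hC hx
  have := hdiv.log hne
  convert this using 1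
  field_simp
  ring

private lemma formula_hasDerivAt (a b x : ℝ) (hx : (x - a) ^ 2 + b ≠ 0) :
    HasDerivAt (fun s : ℝ => -(2 * (s - a)) / ((s - a) ^ 2 + b))
      ((-2 * ((x - a) ^ 2 + b) + 4 * (x - a) ^ 2) / ((x - a) ^ 2 + b) ^ 2) x := by
  have hq := quad_hasDerivAt a b x
  have hn : HasDerivAt (fun s : ℝ => -(2 * (s - a))) (-2) x := by
    have h : HasDerivAt (fun s : ℝ => s - a) 1 x := (hasDerivAt_id x).sub_const a
    have h2 : HasDerivAt (fun s : ℝ => 2 * (s - a)) (2 * 1) x := h.const_mul 2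
    have h3 := h2.neg
    rw [show -(2 * 1 : ℝ) = -2 by ring] at h3
    exact h3
  have := hn.fun_div hq hx
  rw [show ((-2 * ((x - a) ^ 2 + b) + 4 * (x - a) ^ 2) / ((x - a) ^ 2 + b) ^ 2) = ((-2 * ((x - a) ^ 2 + b) - -(2 * (x - a)) * (2 * (x - a))) / ((x - a) ^ 2 + b) ^ 2) by ring]
  exact this

private lemma second_deriv (C a b : ℝ) (hC : C ≠ 0) (x : ℝ)
    (hx : 0 < (x - a) ^ 2 + b) :
    deriv (fun s => deriv (fun s' : ℝ => Real.log (C / ((s' - a) ^ 2 + b))) s) x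
      = (-2 * ((x - a) ^ 2 + b) + 4 * (x - a) ^ 2) / ((x - a) ^ 2 + b) ^ 2 := by
  have hcont : Continuous fun s : ℝ => (s - a) ^ 2 + b := by continuity
  have hnb : ∀ᶠ s in nhds x, 0 < (s - a) ^ 2 + b :=
    (hcont.continuousAt).eventually (eventually_gt_nhds hx)
  have heq : (fun s => deriv (fun s' : ℝ => Real.log (C / ((s' - a) ^ 2 + b))) s)
      =ᶠ[nhds x] fun s => -(2 * (s - a)) / ((s - a) ^ 2 + b) := by
    filter_upwards [hnb] with s hs
    exact (logC_hasDerivAt C a b hC s hs.ne').deriv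
  rw [Filter.EventuallyEq.deriv_eq heq]
  exact (formula_hasDerivAt a b x hx.ne').deriv

/-- For every `μ₂ > 0` and `μ₁ ∈ ℝ`, the function
`U(t₁,t₂) = log(2μ₂/((t₁-μ₁)² + (t₂+μ₂)²))` is harmonic on the open upper
half-plane and satisfies `-∂U/∂t₂(t₁,0) = e^{U(t₁,0)}` for all `t₁ ∈ ℝ`. -/
theorem general_bubble_harmonic_and_boundary
    (μ₁ μ₂ : ℝ) (hμ₂ : 0 < μ₂)
    (U : ℝ → ℝ → ℝ)
    (hU : ∀ t₁ t₂ : ℝ,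
      U t₁ t₂ = Real.log (2 * μ₂ / ((t₁ - μ₁) ^ 2 + (t₂ + μ₂) ^ 2))) :
    (∀ t₁ t₂ : ℝ, 0 < t₂ →
      deriv (fun s => deriv (fun s' => U s' t₂) s) t₁ +
        deriv (fun s => deriv (fun s' => U t₁ s') s) t₂ = 0) ∧
    (∀ t₁ : ℝ, -deriv (fun s => U t₁ s) 0 = Real.exp (U t₁ 0)) := by
  have hC : (2 * μ₂ : ℝ) ≠ 0 := by positivity
  constructor
  · intro t₁ t₂ ht₂
    have hU1 : (fun s' => U s' t₂)
        = fun s' => Real.log (2 * μ₂ / ((s' - μ₁) ^ 2 + (t₂ + μ₂) ^ 2)) := by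
      funext s; rw [hU]
    have hU2 : (fun s' => U t₁ s')
        = fun s' => Real.log (2 * μ₂ / ((s' - (-μ₂)) ^ 2 + (t₁ - μ₁) ^ 2)) := by
      funext s; rw [hU]; ring_nf
    have hq1 : 0 < (t₁ - μ₁) ^ 2 + (t₂ + μ₂) ^ 2 := by positivity
    have hq2 : 0 < (t₂ - (-μ₂)) ^ 2 + (t₁ - μ₁) ^ 2 := by
      have h : 0 < t₂ + μ₂ := by linarith
      nlinarith [sq_nonneg (t₁ - μ₁)]
    rw [hU1, hU2, second_deriv (2 * μ₂) μ₁ ((t₂ + μ₂) ^ 2) hC t₁ hq1,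
      second_deriv (2 * μ₂) (-μ₂) ((t₁ - μ₁) ^ 2) hC t₂ hq2]
    field_simp
    ring
  · intro t₁
    have hU2 : (fun s => U t₁ s)
        = fun s => Real.log (2 * μ₂ / ((s - (-μ₂)) ^ 2 + (t₁ - μ₁) ^ 2)) := by
      funext s; rw [hU]; ring_nf
    have hq : (0 : ℝ) < (0 - (-μ₂)) ^ 2 + (t₁ - μ₁) ^ 2 := by
      have : (0 : ℝ) - (-μ₂) = μ₂ := by ring
      rw [this]; positivity
    rw [hU2, (logC_hasDerivAt (2 * μ₂) (-μ₂) ((t₁ - μ₁) ^ 2) hC 0 hq.ne').deriv, hU t₁ 0]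
    have hpos : 0 < 2 * μ₂ / ((t₁ - μ₁) ^ 2 + (0 + μ₂) ^ 2) := by positivity
    rw [Real.exp_log hpos]
    rw [show (0 : ℝ) - (-μ₂) = 0 + μ₂ by ring]
    rw [show ((0 : ℝ) + μ₂) ^ 2 + (t₁ - μ₁) ^ 2 = (t₁ - μ₁) ^ 2 + (0 + μ₂) ^ 2 by ring]
    field_simp
    ring
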